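/- Let P be the orthogonal projection onto the nine-qubit Shor code, spanned by the orthonormal codewords |0_L⟩ = ((|000⟩+|111⟩)/√2)^{⊗3} and |1_L⟩ = ((|000⟩−|111⟩)/√2)^{⊗3}. Then P is not a (3,c)-AD code for any c > 0; in particular A_3(γ) = 0 while B_3(γ) = 3γ³/4 + O(γ⁴) as γ → 0, so for every c > 0 there exists γ ∈ (0,1] with B_3(γ) − A_3(γ) > c·γ⁴. -/

import Mathlib

open Matrix BigOperators Asymptotics Filter
open scoped Topology

/-- The amplitude-damping Kraus operator `K₀ = [[1,0],[0,√(1-γ)]]`. -/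
noncomputable def K0 (γ : ℝ) : Matrix (Fin 2) (Fin 2) ℂ :=
  !![1, 0; 0, (Real.sqrt (1 - γ) : ℂ)]

/-- The amplitude-damping Kraus operator `K₁ = [[0,√γ],[0,0]]`. -/
noncomputable def K1 (γ : ℝ) : Matrix (Fin 2) (Fin 2) ℂ :=
  !![0, (Real.sqrt γ : ℂ); 0, 0]

/-- The `n`-qubit amplitude-damping Kraus operator `K_x = K_{x₁} ⊗ ⋯ ⊗ K_{xₙ}`
for `x ∈ {0,1}ⁿ`, acting on `(ℂ²)^{⊗n} ≅ ℂ^{2^n}`. -/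
noncomputable def ADKraus (γ : ℝ) (n : ℕ) (x : Fin n → Bool) :
    Matrix (Fin n → Fin 2) (Fin n → Fin 2) ℂ :=
  fun v w => ∏ i, (if x i then K1 γ else K0 γ) (v i) (w i)

/-- Hamming weight of a bit string. -/
def hw {n : ℕ} (x : Fin n → Bool) : ℕ := (Finset.univ.filter fun i => x i = true).card

/-- The amplitude-damping A-type enumerator
`A_i(γ) = (1/tr(P)²) Σ_{E∈𝒦_i} tr(EP)·tr(E†P)` (a real number). -/
noncomputable def ADA (n : ℕ) (γ : ℝ)
    (P : Matrix (Fin n → Fin 2) (Fin n → Fin 2) ℂ) (i : ℕ) : ℝ :=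
  ((1 / (Matrix.trace P) ^ 2) *
    ∑ x ∈ Finset.univ.filter (fun x : Fin n → Bool => hw x = i),
      Matrix.trace (ADKraus γ n x * P) * Matrix.trace ((ADKraus γ n x)ᴴ * P)).re

/-- The amplitude-damping B-type enumerator
`B_i(γ) = (1/tr(P)) Σ_{E∈𝒦_i} tr(EPE†P)` (a real number). -/
noncomputable def ADB (n : ℕ) (γ : ℝ)
    (P : Matrix (Fin n → Fin 2) (Fin n → Fin 2) ℂ) (i : ℕ) : ℝ :=
  ((1 / Matrix.trace P) *
    ∑ x ∈ Finset.univ.filter (fun x : Fin n → Bool => hw x = i),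
      Matrix.trace (ADKraus γ n x * P * (ADKraus γ n x)ᴴ * P)).re

/-- The single-block state `(|000⟩ + |111⟩)/√2` as a vector on `(ℂ²)^{⊗3}`. -/
noncomputable def blockPlus : (Fin 3 → Fin 2) → ℂ :=
  fun u => ((Real.sqrt 2 : ℂ))⁻¹ *
    ((if u = (fun _ => 0) then (1 : ℂ) else 0) + (if u = (fun _ => 1) then (1 : ℂ) else 0))

/-- The single-block state `(|000⟩ - |111⟩)/√2` as a vector on `(ℂ²)^{⊗3}`. -/
noncomputable def blockMinus : (Fin 3 → Fin 2) → ℂ :=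
  fun u => ((Real.sqrt 2 : ℂ))⁻¹ *
    ((if u = (fun _ => 0) then (1 : ℂ) else 0) - (if u = (fun _ => 1) then (1 : ℂ) else 0))

/-- The `b`-th block of three bits of a nine-bit string. -/
def blockOf (v : Fin 9 → Fin 2) (b : Fin 3) : Fin 3 → Fin 2 :=
  fun j => v ⟨3 * b.val + j.val, by have := b.2; have := j.2; omega⟩

/-- The Shor-code logical codeword `|0_L⟩ = ((|000⟩+|111⟩)/√2)^{⊗3}`. -/
noncomputable def shor0 : (Fin 9 → Fin 2) → ℂ :=
  fun v => ∏ b : Fin 3, blockPlus (blockOf v b)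

/-- The Shor-code logical codeword `|1_L⟩ = ((|000⟩-|111⟩)/√2)^{⊗3}`. -/
noncomputable def shor1 : (Fin 9 → Fin 2) → ℂ :=
  fun v => ∏ b : Fin 3, blockMinus (blockOf v b)

/-- The projector `P = |0_L⟩⟨0_L| + |1_L⟩⟨1_L|` onto the nine-qubit Shor code. -/
noncomputable def shorP : Matrix (Fin 9 → Fin 2) (Fin 9 → Fin 2) ℂ :=
  fun v w => shor0 v * star (shor0 w) + shor1 v * star (shor1 w)


variable {n : Type*} [Fintype n]

noncomputable def rk1 (a : n → ℂ) : Matrix n n ℂ := fun v w => a v * star (a w)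

noncomputable def bil (E : Matrix n n ℂ) (a b : n → ℂ) : ℂ :=
  ∑ p, ∑ q, star (a p) * E p q * b q

lemma trace_mul_rk1 (E : Matrix n n ℂ) (a : n → ℂ) :
    Matrix.trace (E * rk1 a) = bil E a a := by
  simp only [Matrix.trace, Matrix.diag, Matrix.mul_apply, rk1, bil]
  exact Finset.sum_congr rfl fun p _ => Finset.sum_congr rfl fun q _ => by ring

lemma trace_mul_rk1_conj (E : Matrix n n ℂ) (a b : n → ℂ) :
    Matrix.trace (E * rk1 a * Eᴴ * rk1 b) = bil E b a * star (bil E b a) := by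
  have h1 : ∀ p q, (E * rk1 a) p q = (∑ i, E p i * a i) * star (a q) := by
    intro p q; simp [Matrix.mul_apply, rk1, Finset.sum_mul, mul_assoc]
  have h2 : ∀ p t, (E * rk1 a * Eᴴ) p t
      = (∑ i, E p i * a i) * (∑ q, star (a q) * star (E t q)) := by
    intro p t
    simp only [Matrix.mul_apply, h1, Matrix.conjTranspose_apply, Finset.mul_sum]
    exact Finset.sum_congr rfl fun q _ => by ring
  have h3 : Matrix.trace (E * rk1 a * Eᴴ * rk1 b)
      = ∑ p, ∑ t, ((∑ i, E p i * a i) * (∑ q, star (a q) * star (E t q))) * (b t * star (b p)) := by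
    simp only [Matrix.trace, Matrix.diag, Matrix.mul_apply, h2, rk1]
  rw [h3]
  have hb : bil E b a = ∑ p, star (b p) * ∑ i, E p i * a i := by
    simp only [bil, Finset.mul_sum]
    exact Finset.sum_congr rfl fun p _ => Finset.sum_congr rfl fun i _ => by ring
  have hbs : star (bil E b a) = ∑ t, b t * ∑ q, star (a q) * star (E t q) := by
    rw [hb, star_sum]
    refine Finset.sum_congr rfl fun t _ => ?_
    simp only [star_mul', star_star, star_sum, Finset.mul_sum]
    exact Finset.sum_congr rfl fun q _ => by ring
  rw [hbs, hb, Finset.sum_mul_sum]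
  exact Finset.sum_congr rfl fun p _ => Finset.sum_congr rfl fun t _ => by ring

def bblockOf (x : Fin 9 → Bool) (b : Fin 3) : Fin 3 → Bool :=
  fun j => x ⟨3 * b.val + j.val, by have := b.2; have := j.2; omega⟩

def p9 : Fin 3 × Fin 3 ≃ Fin 9 where
  toFun p := ⟨3 * p.1.val + p.2.val, by have := p.1.2; have := p.2.2; omega⟩
  invFun i := (⟨i.val / 3, by have := i.2; omega⟩, ⟨i.val % 3, by have := i.2; omega⟩)
  left_inv p := by
    have h1 := p.1.2; have h2 := p.2.2
    ext
    · show (3 * p.1.val + p.2.val) / 3 = p.1.val; omega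
    · show (3 * p.1.val + p.2.val) % 3 = p.2.val; omega
  right_inv i := by
    apply Fin.ext
    show 3 * (i.val / 3) + i.val % 3 = i.val
    omega

def unblock (h : Fin 3 → Fin 3 → Fin 2) : Fin 9 → Fin 2 :=
  fun i => h ⟨i.val / 3, by have := i.2; omega⟩ ⟨i.val % 3, by have := i.2; omega⟩

def blkEquiv : (Fin 9 → Fin 2) ≃ (Fin 3 → Fin 3 → Fin 2) where
  toFun v := fun b => blockOf v b
  invFun := unblock
  left_inv v := by
    funext i
    show v _ = v i
    congr 1
    apply Fin.ext
    show 3 * (i.val / 3) + i.val % 3 = i.val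
    omega
  right_inv h := by
    funext b j
    show h _ _ = h b j
    have hb := b.2; have hj := j.2
    congr 1
    · apply Fin.ext; show (3 * b.val + j.val) / 3 = b.val; omega
    · -- second component: dependent, use Fin.ext via heq? use congr result
      apply Fin.ext; show (3 * b.val + j.val) % 3 = j.val; omega

lemma sum_blocks (g : Fin 3 → (Fin 3 → Fin 2) → ℂ) :
    ∑ v : Fin 9 → Fin 2, ∏ b, g b (blockOf v b) = ∏ b, ∑ u, g b u := by
  rw [Fintype.prod_sum]
  exact Fintype.sum_bijective blkEquiv blkEquiv.bijective _ _ (fun v => rfl)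

lemma kraus_blocks (γ : ℝ) (x : Fin 9 → Bool) (v w : Fin 9 → Fin 2) :
    ADKraus γ 9 x v w
      = ∏ b : Fin 3, ADKraus γ 3 (bblockOf x b) (blockOf v b) (blockOf w b) := by
  show _ = ∏ b : Fin 3, ∏ j : Fin 3, _
  rw [← Fintype.prod_prod_type']
  exact (Fintype.prod_bijective p9 p9.bijective _ _ (fun p => rfl)).symm

def e0 : Fin 3 → Fin 2 := fun _ => 0
def e1 : Fin 3 → Fin 2 := fun _ => 1
def cf : Fin 3 → Bool := fun _ => false
def ct : Fin 3 → Bool := fun _ => true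

noncomputable def bvec (ε : ℂ) : (Fin 3 → Fin 2) → ℂ :=
  fun u => ((Real.sqrt 2 : ℂ))⁻¹ *
    ((if u = e0 then (1 : ℂ) else 0) + ε * (if u = e1 then (1 : ℂ) else 0))

lemma blockPlus_eq : blockPlus = bvec 1 := by
  funext u
  simp only [blockPlus, bvec, one_mul]
  rfl

lemma blockMinus_eq : blockMinus = bvec (-1) := by
  funext u
  simp only [blockMinus, bvec, neg_one_mul, sub_eq_add_neg]
  rfl

lemma K_e0_e0 (γ : ℝ) (y : Fin 3 → Bool) :
    ADKraus γ 3 y e0 e0 = if y = cf then 1 else 0 := by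
  by_cases hy : y = cf
  · subst hy; simp [ADKraus, cf, e0, K0]
  · rw [if_neg hy]
    have : ∃ j, y j = true := by
      by_contra h
      push_neg at h
      exact hy (funext fun j => by simpa [cf] using h j)
    obtain ⟨j, hj⟩ := this
    exact Finset.prod_eq_zero (Finset.mem_univ j) (by simp [hj, K1, e0])

lemma K_e1_e1 (γ : ℝ) (y : Fin 3 → Bool) :
    ADKraus γ 3 y e1 e1 = if y = cf then ((Real.sqrt (1-γ) : ℂ))^3 else 0 := by
  by_cases hy : y = cf
  · subst hy; simp [ADKraus, cf, e1, K0, Finset.prod_const]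
  · rw [if_neg hy]
    have : ∃ j, y j = true := by
      by_contra h
      push_neg at h
      exact hy (funext fun j => by simpa [cf] using h j)
    obtain ⟨j, hj⟩ := this
    exact Finset.prod_eq_zero (Finset.mem_univ j) (by simp [hj, K1, e1])

lemma K_e0_e1 (γ : ℝ) (y : Fin 3 → Bool) :
    ADKraus γ 3 y e0 e1 = if y = ct then ((Real.sqrt γ : ℂ))^3 else 0 := by
  by_cases hy : y = ct
  · subst hy; simp [ADKraus, ct, e0, e1, K1, Finset.prod_const]
  · rw [if_neg hy]
    have : ∃ j, y j = false := by
      by_contra h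
      push_neg at h
      exact hy (funext fun j => by simpa [ct] using h j)
    obtain ⟨j, hj⟩ := this
    exact Finset.prod_eq_zero (Finset.mem_univ j) (by simp [hj, K0, e0, e1])

lemma K_e1_e0 (γ : ℝ) (y : Fin 3 → Bool) :
    ADKraus γ 3 y e1 e0 = 0 := by
  refine Finset.prod_eq_zero (Finset.mem_univ 0) ?_
  by_cases h : y 0 <;> simp [h, K0, K1, e0, e1]

noncomputable def Sblk (γ : ℝ) (y : Fin 3 → Bool) (ε ε' : ℂ) : ℂ :=
  ∑ u : Fin 3 → Fin 2, ∑ u' : Fin 3 → Fin 2,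
    star (bvec ε u) * ADKraus γ 3 y u u' * bvec ε' u'

lemma star_bvec (ε : ℂ) (u : Fin 3 → Fin 2) :
    star (bvec ε u) = ((Real.sqrt 2 : ℂ))⁻¹ *
      ((if u = e0 then (1 : ℂ) else 0) + star ε * (if u = e1 then (1 : ℂ) else 0)) := by
  simp [bvec, star_add, star_mul', apply_ite (star : ℂ → ℂ), Complex.conj_ofReal]

lemma collapse (c : ℂ) (f : (Fin 3 → Fin 2) → ℂ) :
    ∑ u : Fin 3 → Fin 2, ((if u = e0 then (1:ℂ) else 0) + c * (if u = e1 then (1:ℂ) else 0)) * f u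
      = f e0 + c * f e1 := by
  simp [add_mul, mul_assoc, ite_mul, Finset.sum_add_distrib, Finset.sum_ite_eq,
    Finset.mul_sum]

lemma Sblk_eval (γ : ℝ) (y : Fin 3 → Bool) (ε ε' : ℂ) :
    Sblk γ y ε ε' = (2:ℂ)⁻¹ *
      ((if y = cf then 1 + star ε * ε' * ((Real.sqrt (1-γ) : ℂ))^3 else 0)
        + (if y = ct then ε' * ((Real.sqrt γ : ℂ))^3 else 0)) := by
  have key : Sblk γ y ε ε' = ((Real.sqrt 2 : ℂ))⁻¹ * ((Real.sqrt 2 : ℂ))⁻¹ *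
      ((ADKraus γ 3 y e0 e0 + ε' * ADKraus γ 3 y e0 e1)
        + star ε * (ADKraus γ 3 y e1 e0 + ε' * ADKraus γ 3 y e1 e1)) := by
    unfold Sblk
    have inner : ∀ u, ∑ u' : Fin 3 → Fin 2,
        star (bvec ε u) * ADKraus γ 3 y u u' * bvec ε' u'
        = star (bvec ε u) * ((Real.sqrt 2 : ℂ))⁻¹ *
          (ADKraus γ 3 y u e0 + ε' * ADKraus γ 3 y u e1) := by
      intro u
      have : ∀ u', star (bvec ε u) * ADKraus γ 3 y u u' * bvec ε' u'
          = star (bvec ε u) * ((Real.sqrt 2 : ℂ))⁻¹ *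
            (((if u' = e0 then (1:ℂ) else 0) + ε' * (if u' = e1 then (1:ℂ) else 0))
              * ADKraus γ 3 y u u') := by
        intro u'; simp only [bvec]; ring
      rw [Finset.sum_congr rfl (fun u' _ => this u'), ← Finset.mul_sum,
        collapse ε' (fun u' => ADKraus γ 3 y u u')]
    rw [Finset.sum_congr rfl (fun u _ => inner u)]
    have : ∀ u, star (bvec ε u) * ((Real.sqrt 2 : ℂ))⁻¹ *
        (ADKraus γ 3 y u e0 + ε' * ADKraus γ 3 y u e1)
        = ((Real.sqrt 2 : ℂ))⁻¹ * ((Real.sqrt 2 : ℂ))⁻¹ *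
          (((if u = e0 then (1:ℂ) else 0) + star ε * (if u = e1 then (1:ℂ) else 0))
            * (ADKraus γ 3 y u e0 + ε' * ADKraus γ 3 y u e1)) := by
      intro u; rw [star_bvec]; ring
    rw [Finset.sum_congr rfl (fun u _ => this u), ← Finset.mul_sum,
      collapse (star ε) (fun u => ADKraus γ 3 y u e0 + ε' * ADKraus γ 3 y u e1)]
  rw [key, K_e0_e0, K_e0_e1, K_e1_e0, K_e1_e1]
  have h2 : ((Real.sqrt 2 : ℂ))⁻¹ * ((Real.sqrt 2 : ℂ))⁻¹ = (2:ℂ)⁻¹ := by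
    rw [← mul_inv, ← Complex.ofReal_mul,
      Real.mul_self_sqrt (by norm_num : (0:ℝ) ≤ 2)]
    norm_num
  rw [h2]
  have hne : ct ≠ cf := by
    intro h; have := congrFun h 0; simp [cf, ct] at this
  by_cases hy1 : y = cf <;> by_cases hy2 : y = ct <;>
    simp [hy1, hy2, hne] <;> ring

noncomputable def svec (ε : ℂ) : (Fin 9 → Fin 2) → ℂ :=
  fun v => ∏ b : Fin 3, bvec ε (blockOf v b)

lemma shor0_eq : shor0 = svec 1 := by
  funext v; simp [shor0, svec, blockPlus_eq]

lemma shor1_eq : shor1 = svec (-1) := by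
  funext v; simp [shor1, svec, blockMinus_eq]

lemma bil_kraus (γ : ℝ) (x : Fin 9 → Bool) (ε ε' : ℂ) :
    bil (ADKraus γ 9 x) (svec ε) (svec ε') = ∏ b : Fin 3, Sblk γ (bblockOf x b) ε ε' := by
  unfold bil
  have h1 : ∀ p q : Fin 9 → Fin 2,
      star (svec ε p) * ADKraus γ 9 x p q * svec ε' q
        = ∏ b : Fin 3, (star (bvec ε (blockOf p b))
            * ADKraus γ 3 (bblockOf x b) (blockOf p b) (blockOf q b)
            * bvec ε' (blockOf q b)) := by
    intro p q
    rw [kraus_blocks, svec, svec, star_prod, Finset.prod_mul_distrib,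
      Finset.prod_mul_distrib]
  have h2 : ∀ p : Fin 9 → Fin 2,
      (∑ q : Fin 9 → Fin 2, star (svec ε p) * ADKraus γ 9 x p q * svec ε' q)
        = ∏ b : Fin 3, ∑ u' : Fin 3 → Fin 2, (star (bvec ε (blockOf p b))
            * ADKraus γ 3 (bblockOf x b) (blockOf p b) u' * bvec ε' u') := by
    intro p
    rw [Finset.sum_congr rfl (fun q _ => h1 p q)]
    exact sum_blocks (fun b u' => star (bvec ε (blockOf p b))
      * ADKraus γ 3 (bblockOf x b) (blockOf p b) u' * bvec ε' u')
  rw [Finset.sum_congr rfl (fun p _ => h2 p)]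
  rw [sum_blocks (fun b u => ∑ u' : Fin 3 → Fin 2,
    star (bvec ε u) * ADKraus γ 3 (bblockOf x b) u u' * bvec ε' u')]
  rfl

lemma shorP_eq : shorP = rk1 shor0 + rk1 shor1 := rfl

lemma trace_EP (γ : ℝ) (x : Fin 9 → Bool) :
    Matrix.trace (ADKraus γ 9 x * shorP)
      = (∏ b : Fin 3, Sblk γ (bblockOf x b) 1 1)
        + ∏ b : Fin 3, Sblk γ (bblockOf x b) (-1) (-1) := by
  rw [shorP_eq, mul_add, Matrix.trace_add, trace_mul_rk1, trace_mul_rk1,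
    shor0_eq, shor1_eq, bil_kraus, bil_kraus]

lemma trace_EPEP (γ : ℝ) (x : Fin 9 → Bool) :
    Matrix.trace (ADKraus γ 9 x * shorP * (ADKraus γ 9 x)ᴴ * shorP)
      = (∏ b : Fin 3, Sblk γ (bblockOf x b) 1 1) * star (∏ b : Fin 3, Sblk γ (bblockOf x b) 1 1)
      + (∏ b : Fin 3, Sblk γ (bblockOf x b) (-1) 1) * star (∏ b : Fin 3, Sblk γ (bblockOf x b) (-1) 1)
      + (∏ b : Fin 3, Sblk γ (bblockOf x b) 1 (-1)) * star (∏ b : Fin 3, Sblk γ (bblockOf x b) 1 (-1))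
      + (∏ b : Fin 3, Sblk γ (bblockOf x b) (-1) (-1)) * star (∏ b : Fin 3, Sblk γ (bblockOf x b) (-1) (-1)) := by
  rw [shorP_eq]
  simp only [mul_add, add_mul, Matrix.trace_add]
  rw [trace_mul_rk1_conj, trace_mul_rk1_conj, trace_mul_rk1_conj, trace_mul_rk1_conj,
    shor0_eq, shor1_eq, bil_kraus, bil_kraus, bil_kraus, bil_kraus]
  ring

def X3 (b : Fin 3) : Fin 9 → Bool := fun i => decide (i.val / 3 = b.val)

lemma bblockOf_X3 : ∀ b b' : Fin 3, bblockOf (X3 b) b' = if b' = b then ct else cf := by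
  decide

set_option maxRecDepth 100000 in
lemma classify : ∀ x : Fin 9 → Bool, hw x = 3 →
    x = X3 0 ∨ x = X3 1 ∨ x = X3 2
      ∨ ∃ b, bblockOf x b ≠ cf ∧ bblockOf x b ≠ ct := by
  decide

lemma hne_cf_ct : cf ≠ ct := by decide

lemma Sblk_cf (γ : ℝ) (ε ε' : ℂ) :
    Sblk γ cf ε ε' = (2:ℂ)⁻¹ * (1 + star ε * ε' * ((Real.sqrt (1-γ) : ℂ))^3) := by
  rw [Sblk_eval, if_pos rfl, if_neg hne_cf_ct]; ring

lemma Sblk_ct (γ : ℝ) (ε ε' : ℂ) :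
    Sblk γ ct ε ε' = (2:ℂ)⁻¹ * (ε' * ((Real.sqrt γ : ℂ))^3) := by
  rw [Sblk_eval, if_pos rfl, if_neg (Ne.symm hne_cf_ct)]; ring

lemma prod_X3 (γ : ℝ) (ε ε' : ℂ) (b : Fin 3) :
    ∏ b' : Fin 3, Sblk γ (bblockOf (X3 b) b') ε ε'
      = Sblk γ ct ε ε' * Sblk γ cf ε ε' ^ 2 := by
  fin_cases b <;>
    rw [Fin.prod_univ_three] <;>
    norm_num [bblockOf_X3, Fin.ext_iff] <;>
    ring

lemma prod_bad (γ : ℝ) (ε ε' : ℂ) (x : Fin 9 → Bool)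
    (hb : ∃ b, bblockOf x b ≠ cf ∧ bblockOf x b ≠ ct) :
    ∏ b' : Fin 3, Sblk γ (bblockOf x b') ε ε' = 0 := by
  obtain ⟨b, hb1, hb2⟩ := hb
  refine Finset.prod_eq_zero (Finset.mem_univ b) ?_
  rw [Sblk_eval, if_neg hb1, if_neg hb2]; ring

lemma trace_EP_zero (γ : ℝ) (x : Fin 9 → Bool) (h : hw x = 3) :
    Matrix.trace (ADKraus γ 9 x * shorP) = 0 := by
  rw [trace_EP]
  rcases classify x h with h0 | h0 | h0 | hbad
  any_goals
    subst h0
    rw [prod_X3, prod_X3, Sblk_ct, Sblk_ct, Sblk_cf, Sblk_cf]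
    simp only [star_one, star_neg, one_mul, neg_one_mul, neg_neg]
    ring
  rw [prod_bad γ _ _ x hbad, prod_bad γ _ _ x hbad]; ring

noncomputable def zc (γ : ℝ) (ε ε' : ℂ) : ℂ := Sblk γ ct ε ε' * Sblk γ cf ε ε' ^ 2

noncomputable def Tc (γ : ℝ) : ℂ :=
  zc γ 1 1 * star (zc γ 1 1) + zc γ (-1) 1 * star (zc γ (-1) 1)
    + zc γ 1 (-1) * star (zc γ 1 (-1)) + zc γ (-1) (-1) * star (zc γ (-1) (-1))

lemma X3_ne_blocks {x : Fin 9 → Bool}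
    (hbad : ∃ b, bblockOf x b ≠ cf ∧ bblockOf x b ≠ ct) (j : Fin 3) : x ≠ X3 j := by
  rintro rfl
  obtain ⟨b, hb1, hb2⟩ := hbad
  rw [bblockOf_X3] at hb1 hb2
  by_cases hbj : b = j
  · rw [if_pos hbj] at hb2; exact hb2 rfl
  · rw [if_neg hbj] at hb1; exact hb1 rfl

lemma trace_EPEP_eq (γ : ℝ) (x : Fin 9 → Bool) (h : hw x = 3) :
    Matrix.trace (ADKraus γ 9 x * shorP * (ADKraus γ 9 x)ᴴ * shorP)
      = (if x = X3 0 then Tc γ else 0) + (if x = X3 1 then Tc γ else 0)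
        + (if x = X3 2 then Tc γ else 0) := by
  rw [trace_EPEP]
  rcases classify x h with h0 | h0 | h0 | hbad
  · subst h0
    rw [if_pos rfl, if_neg (by decide), if_neg (by decide)]
    simp only [prod_X3, Tc, zc]; ring
  · subst h0
    rw [if_neg (by decide), if_pos rfl, if_neg (by decide)]
    simp only [prod_X3, Tc, zc]; ring
  · subst h0
    rw [if_neg (by decide), if_neg (by decide), if_pos rfl]
    simp only [prod_X3, Tc, zc]; ring
  · rw [if_neg (X3_ne_blocks hbad 0), if_neg (X3_ne_blocks hbad 1),
      if_neg (X3_ne_blocks hbad 2)]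
    simp only [prod_bad γ _ _ x hbad]; ring

lemma sumB (γ : ℝ) :
    ∑ x ∈ Finset.univ.filter (fun x : Fin 9 → Bool => hw x = 3),
      Matrix.trace (ADKraus γ 9 x * shorP * (ADKraus γ 9 x)ᴴ * shorP)
      = Tc γ + Tc γ + Tc γ := by
  rw [Finset.sum_congr rfl (fun x hx => trace_EPEP_eq γ x (Finset.mem_filter.1 hx).2)]
  rw [Finset.sum_add_distrib, Finset.sum_add_distrib,
    Finset.sum_ite_eq', Finset.sum_ite_eq', Finset.sum_ite_eq']
  rw [if_pos (by decide), if_pos (by decide), if_pos (by decide)]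

lemma ADKraus_zero_id : ADKraus 0 9 (fun _ => false) = 1 := by
  apply Matrix.ext
  intro v w
  show (∏ i : Fin 9, (K0 0) (v i) (w i)) = _
  by_cases hvw : v = w
  · subst hvw
    rw [Matrix.one_apply_eq]
    refine Finset.prod_eq_one fun i _ => ?_
    have hd : ∀ a : Fin 2, K0 0 a a = 1 := by
      intro a; fin_cases a <;> norm_num [K0, Real.sqrt_one]
    exact hd (v i)
  · rw [Matrix.one_apply_ne hvw]
    have : ∃ i, v i ≠ w i := by
      by_contra h; push_neg at h; exact hvw (funext h)
    obtain ⟨i, hi⟩ := this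
    refine Finset.prod_eq_zero (Finset.mem_univ i) ?_
    have hd : ∀ a b : Fin 2, a ≠ b → K0 0 a b = 0 := by
      intro a b hab; fin_cases a <;> fin_cases b <;> simp_all [K0]
    exact hd _ _ hi

lemma bblockOf_false (b : Fin 3) : bblockOf (fun _ => false) b = cf := rfl

lemma trace_shorP : Matrix.trace shorP = 2 := by
  have h := trace_EP 0 (fun _ => false)
  rw [ADKraus_zero_id, one_mul] at h
  rw [h]
  have h1 : (1:ℝ) - 0 = 1 := by norm_num
  simp only [bblockOf_false, Sblk_cf, Finset.prod_const, Finset.card_univ,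
    Fintype.card_fin, h1, Real.sqrt_one, star_one, star_neg]
  norm_num

lemma Tc_eq (γ : ℝ) : Tc γ =
    ((Real.sqrt γ ^ 6 / 32 * ((1 + Real.sqrt (1-γ)^3)^4 + (1 - Real.sqrt (1-γ)^3)^4) : ℝ) : ℂ) := by
  unfold Tc zc
  simp only [Sblk_cf, Sblk_ct, star_one, star_neg, one_mul, neg_one_mul, neg_neg,
    star_mul', star_pow, star_add, star_sub, star_inv₀, Complex.conj_ofReal]
  push_cast
  norm_num [star_one, star_neg, star_ofNat]
  ring

lemma ADA_val (γ : ℝ) : ADA 9 γ shorP 3 = 0 := by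
  unfold ADA
  rw [Finset.sum_eq_zero (fun x hx => by
    rw [trace_EP_zero γ x (Finset.mem_filter.1 hx).2, zero_mul])]
  simp

lemma ADB_val (γ : ℝ) : ADB 9 γ shorP 3
    = 3 / 64 * Real.sqrt γ ^ 6
        * ((1 + Real.sqrt (1-γ)^3)^4 + (1 - Real.sqrt (1-γ)^3)^4) := by
  unfold ADB
  rw [sumB, trace_shorP, Tc_eq]
  have : (1 / (2:ℂ)) *
      (((Real.sqrt γ ^ 6 / 32 * ((1 + Real.sqrt (1-γ)^3)^4 + (1 - Real.sqrt (1-γ)^3)^4) : ℝ) : ℂ)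
        + ((Real.sqrt γ ^ 6 / 32 * ((1 + Real.sqrt (1-γ)^3)^4 + (1 - Real.sqrt (1-γ)^3)^4) : ℝ) : ℂ)
        + ((Real.sqrt γ ^ 6 / 32 * ((1 + Real.sqrt (1-γ)^3)^4 + (1 - Real.sqrt (1-γ)^3)^4) : ℝ) : ℂ))
      = ((3 / 64 * Real.sqrt γ ^ 6
          * ((1 + Real.sqrt (1-γ)^3)^4 + (1 - Real.sqrt (1-γ)^3)^4) : ℝ) : ℂ) := by
    push_cast; ring
  rw [this, Complex.ofReal_re]

lemma sqrt6 (γ : ℝ) (hγ : 0 ≤ γ) : Real.sqrt γ ^ 6 = γ ^ 3 := by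
  rw [show (6:ℕ) = 2*3 from rfl, pow_mul, Real.sq_sqrt hγ]

lemma s_facts (γ : ℝ) (h0 : 0 ≤ γ) (h1 : γ ≤ 1) :
    0 ≤ Real.sqrt (1-γ)^3 ∧ Real.sqrt (1-γ)^3 ≤ 1 ∧ 1 - Real.sqrt (1-γ)^3 ≤ 3*γ := by
  set t := Real.sqrt (1-γ) with ht
  have ht0 : 0 ≤ t := Real.sqrt_nonneg _
  have ht1 : t ≤ 1 := Real.sqrt_le_one.mpr (by linarith)
  have ht2 : t^2 = 1 - γ := Real.sq_sqrt (by linarith)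
  refine ⟨by positivity, ?_, ?_⟩
  · calc t^3 ≤ 1^3 := pow_le_pow_left₀ ht0 ht1 3
    _ = 1 := one_pow 3
  · nlinarith [mul_nonneg (mul_nonneg ht0 ht0) ht0, sq_nonneg (1-t), sq_nonneg t]

lemma ADB_bound (γ : ℝ) (h0 : 0 < γ) (h1 : γ ≤ 1) :
    |ADB 9 γ shorP 3 - 3*γ^3/4| ≤ 9/2 * γ^4 := by
  rw [ADB_val, sqrt6 γ h0.le]
  obtain ⟨hs0, hs1, hs3⟩ := s_facts γ h0.le h1
  set s := Real.sqrt (1-γ)^3 with hs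
  have hA1 : (1+s)^4 ≤ 16 := by
    calc (1+s)^4 ≤ 2^4 := pow_le_pow_left₀ (by linarith) (by linarith) 4
    _ = 16 := by norm_num
  have hA2 : 16 - 32*(1-s) ≤ (1+s)^4 := by
    nlinarith [mul_nonneg (sq_nonneg (1-s))
      (show (0:ℝ) ≤ s^2+6*s+17 by nlinarith [sq_nonneg s])]
  have hB1 : (0:ℝ) ≤ (1-s)^4 := by positivity
  have hB2 : (1-s)^4 ≤ 3*γ := by
    calc (1-s)^4 ≤ (1-s)^1 := pow_le_pow_of_le_one (by linarith) (by linarith) (by norm_num)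
    _ = 1-s := pow_one _
    _ ≤ 3*γ := hs3
  have hγ3 : (0:ℝ) < γ^3 := pow_pos h0 3
  rw [abs_le]
  constructor
  · nlinarith [mul_le_mul_of_nonneg_left hA2 hγ3.le,
      mul_le_mul_of_nonneg_left hs3 hγ3.le]
  · nlinarith [mul_le_mul_of_nonneg_left hA1 hγ3.le,
      mul_le_mul_of_nonneg_left hB2 hγ3.le]

lemma ADB_lower (γ : ℝ) (h0 : 0 ≤ γ) (h1 : γ ≤ 1) :
    3/64 * γ^3 ≤ ADB 9 γ shorP 3 := by
  rw [ADB_val, sqrt6 γ h0]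
  obtain ⟨hs0, hs1, hs3⟩ := s_facts γ h0 h1
  set s := Real.sqrt (1-γ)^3 with hs
  have hA : (1:ℝ) ≤ (1+s)^4 := one_le_pow₀ (by linarith)
  have hB1 : (0:ℝ) ≤ (1-s)^4 := by positivity
  have hγ3 : (0:ℝ) ≤ γ^3 := by positivity
  nlinarith [mul_le_mul_of_nonneg_left hA hγ3]

/-- For the nine-qubit Shor code: `A₃(γ) = 0` for all `γ ∈ [0,1]`,
`B₃(γ) = 3γ³/4 + O(γ⁴)` as `γ → 0⁺`, and the code is not a `(3,c)`-AD code for any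
`c > 0`: for every `c > 0` there is `γ ∈ (0,1]` with `B₃(γ) - A₃(γ) > c·γ⁴`. -/
theorem stmt12 :
    (∀ γ : ℝ, 0 ≤ γ → γ ≤ 1 → ADA 9 γ shorP 3 = 0) ∧
      ((fun γ : ℝ => ADB 9 γ shorP 3 - 3 * γ ^ 3 / 4) =O[𝓝[>] (0 : ℝ)]
        fun γ : ℝ => γ ^ 4) ∧
      ∀ c : ℝ, 0 < c → ∃ γ : ℝ, 0 < γ ∧ γ ≤ 1 ∧
        ADB 9 γ shorP 3 - ADA 9 γ shorP 3 > c * γ ^ 4 := by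
  refine ⟨fun γ _ _ => ADA_val γ, ?_, ?_⟩
  · rw [Asymptotics.isBigO_iff]
    refine ⟨9/2, ?_⟩
    filter_upwards [Ioc_mem_nhdsGT_of_mem
      (show (0:ℝ) ∈ Set.Ico (0:ℝ) 1 by constructor <;> norm_num)] with γ hγ
    rw [Real.norm_eq_abs, Real.norm_eq_abs, abs_pow]
    calc |ADB 9 γ shorP 3 - 3 * γ ^ 3 / 4| ≤ 9/2 * γ^4 := ADB_bound γ hγ.1 hγ.2
    _ = 9/2 * |γ|^4 := by rw [abs_of_pos hγ.1]
  · intro c hc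
    refine ⟨min 1 (3/(128*c)), lt_min one_pos (by positivity), min_le_left _ _, ?_⟩
    set γ := min 1 (3/(128*c)) with hγdef
    have h0 : 0 < γ := lt_min one_pos (by positivity)
    have h1 : γ ≤ 1 := min_le_left _ _
    have h2 : γ ≤ 3/(128*c) := min_le_right _ _
    have hcγ : c * γ ≤ 3/128 := by
      have := (le_div_iff₀ (show (0:ℝ) < 128*c by positivity)).mp h2
      nlinarith
    have hlow := ADB_lower γ h0.le h1
    rw [ADA_val, sub_zero]
    have hγ3 : (0:ℝ) < γ^3 := pow_pos h0 3
    have : c * γ^4 = (c*γ) * γ^3 := by ring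
    rw [this]
    calc (c*γ) * γ^3 ≤ 3/128 * γ^3 := mul_le_mul_of_nonneg_right hcγ hγ3.le
    _ < 3/64 * γ^3 := by nlinarith
    _ ≤ ADB 9 γ shorP 3 := hlow
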